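/- arXiv:2507.01784 — 4 statements merged into one kernel-verified Lean document; each statement's English description precedes it below -/
import Mathlib

section
/- Let (R, m, k) be a commutative noetherian local ring whose maximal ideal decomposes as m = I ⊕ J (an internal direct sum) for nonzero ideals I and J of R. Then R is isomorphic as a ring to the fiber product R/I ×_k R/J, i.e., to the subring {(a, b) ∈ R/I × R/J : a and b have the same image in k} where k = R/m. -/
open IsLocalRing

/-- A commutative noetherian local ring whose maximal ideal decomposes as an internal
direct sum `m = I ⊕ J` of nonzero ideals is isomorphic to the fiber product
`R/I ×_k R/J` over the residue field `k = R/m`, i.e. to the subring of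
`(R/I) × (R/J)` of pairs whose components have the same image in `k`. -/
theorem stmt1 {R : Type*} [CommRing R] [IsNoetherianRing R] [IsLocalRing R]
    (I J : Ideal R) (hI : I ≠ ⊥) (hJ : J ≠ ⊥)
    (hsum : I ⊔ J = maximalIdeal R) (hdisj : I ⊓ J = ⊥) :
    Nonempty (R ≃+* (RingHom.eqLocus
      ((Ideal.Quotient.factor (S := I) (T := maximalIdeal R) (hsum ▸ le_sup_left)).comp
        (RingHom.fst (R ⧸ I) (R ⧸ J)))
      ((Ideal.Quotient.factor (S := J) (T := maximalIdeal R) (hsum ▸ le_sup_right)).comp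
        (RingHom.snd (R ⧸ I) (R ⧸ J))))) := by
  refine ⟨RingEquiv.ofBijective
    (((Ideal.Quotient.mk I).prod (Ideal.Quotient.mk J)).codRestrict _ ?_) ⟨?_, ?_⟩⟩
  · intro x
    show _ = _
    simp [Ideal.Quotient.factor_mk]
  · intro x y hxy
    have h := congrArg Subtype.val hxy
    simp only [RingHom.codRestrict_apply, RingHom.prod_apply, Prod.mk.injEq] at h
    have h1 : x - y ∈ I := by
      exact Ideal.Quotient.eq.mp h.1
    have h2 : x - y ∈ J := Ideal.Quotient.eq.mp h.2
    have : x - y ∈ I ⊓ J := ⟨h1, h2⟩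
    rw [hdisj, Ideal.mem_bot, sub_eq_zero] at this
    exact this
  · rintro ⟨⟨a, b⟩, hab⟩
    obtain ⟨x, rfl⟩ := Ideal.Quotient.mk_surjective a
    obtain ⟨y, rfl⟩ := Ideal.Quotient.mk_surjective b
    have hab' : (Ideal.Quotient.mk (maximalIdeal R)) x = (Ideal.Quotient.mk (maximalIdeal R)) y := by
      have h2 : (Ideal.Quotient.factor (S := I) (T := maximalIdeal R) (hsum ▸ le_sup_left))
          ((Ideal.Quotient.mk I) x) =
          (Ideal.Quotient.factor (S := J) (T := maximalIdeal R) (hsum ▸ le_sup_right))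
          ((Ideal.Quotient.mk J) y) := hab
      simpa [Ideal.Quotient.factor_mk] using h2
    have hxy : x - y ∈ maximalIdeal R := Ideal.Quotient.eq.mp hab'
    rw [← hsum] at hxy
    obtain ⟨i, hi, j, hj, hij⟩ := Submodule.mem_sup.mp hxy
    refine ⟨x - i, Subtype.ext ?_⟩
    simp only [RingHom.codRestrict_apply, RingHom.prod_apply, Prod.mk.injEq]
    constructor
    · rw [Ideal.Quotient.eq]
      simpa using I.neg_mem hi
    · rw [Ideal.Quotient.eq]
      have : x - i - y = j := by linear_combination -hij
      rw [this]; exact hj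
end

section
/- For a field k, the ring k[[x]] ×_k k[[y]] (fiber product over k of two formal power series rings in one variable) is isomorphic as a k-algebra to k[[x, y]]/(xy). -/
/-- The constant coefficient map `k⟦X⟧ → k` as a `k`-algebra homomorphism. -/
noncomputable def psConstantCoeffAlgHom (k : Type*) [CommRing k] :
    PowerSeries k →ₐ[k] k :=
  { (PowerSeries.constantCoeff : PowerSeries k →+* k) with
    commutes' := fun r => by
      simp [PowerSeries.algebraMap_apply] }

open MvPowerSeries Finsupp in
/-- Setting the variable other than `s` to zero, as an algebra hom. -/
noncomputable def killVar (k : Type*) [CommRing k] (s : Fin 2) :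
    MvPowerSeries (Fin 2) k →ₐ[k] PowerSeries k where
  toFun F := PowerSeries.mk fun n => MvPowerSeries.coeff (Finsupp.single s n) F
  map_one' := by
    ext n
    simp [PowerSeries.coeff_mk, MvPowerSeries.coeff_one, PowerSeries.coeff_one,
      Finsupp.single_eq_zero]
  map_mul' F G := by
    ext n
    rw [PowerSeries.coeff_mk, PowerSeries.coeff_mul, MvPowerSeries.coeff_mul,
      Finsupp.antidiagonal_single, Finset.sum_map]
    simp [PowerSeries.coeff_mk]
  map_zero' := by
    ext n
    simp [PowerSeries.coeff_mk]
  map_add' F G := by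
    ext n
    simp [PowerSeries.coeff_mk]
  commutes' r := by
    ext n
    rw [PowerSeries.coeff_mk, MvPowerSeries.algebraMap_apply, PowerSeries.algebraMap_apply]
    simp only [Algebra.algebraMap_self, RingHom.id_apply, MvPowerSeries.coeff_C,
      PowerSeries.coeff_C, Finsupp.single_eq_zero]

/-- For a field `k`, the fiber product `k[[x]] ×_k k[[y]]` (the subalgebra of
`k[[x]] × k[[y]]` of pairs whose constant terms agree) is isomorphic as a
`k`-algebra to `k[[x, y]]/(xy)`. -/
theorem stmt3 (k : Type*) [Field k] :
    Nonempty ((AlgHom.equalizer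
        ((psConstantCoeffAlgHom k).comp (AlgHom.fst k (PowerSeries k) (PowerSeries k)))
        ((psConstantCoeffAlgHom k).comp (AlgHom.snd k (PowerSeries k) (PowerSeries k))))
      ≃ₐ[k]
      (MvPowerSeries (Fin 2) k ⧸
        Ideal.span {(MvPowerSeries.X 0 : MvPowerSeries (Fin 2) k) * MvPowerSeries.X 1})) := by
  classical
  set A := AlgHom.equalizer
      ((psConstantCoeffAlgHom k).comp (AlgHom.fst k (PowerSeries k) (PowerSeries k)))
      ((psConstantCoeffAlgHom k).comp (AlgHom.snd k (PowerSeries k) (PowerSeries k))) with hA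
  have hfst : ∀ x : PowerSeries k × PowerSeries k,
      AlgHom.fst k (PowerSeries k) (PowerSeries k) x = x.1 := fun _ => rfl
  have hsnd : ∀ x : PowerSeries k × PowerSeries k,
      AlgHom.snd k (PowerSeries k) (PowerSeries k) x = x.2 := fun _ => rfl
  have hconst : ∀ f : PowerSeries k, psConstantCoeffAlgHom k f = PowerSeries.coeff 0 f :=
    fun f => by rw [PowerSeries.coeff_zero_eq_constantCoeff]; rfl
  -- the pair map lands in the equalizer
  have hmem : ∀ F : MvPowerSeries (Fin 2) k,
      ((killVar k 0).prod (killVar k 1)) F ∈ A := by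
    intro F
    rw [hA, AlgHom.mem_equalizer]
    simp only [AlgHom.comp_apply, hfst, hsnd, hconst,
      AlgHom.prod_apply]
    simp [killVar, PowerSeries.coeff_mk]
  set Φ : MvPowerSeries (Fin 2) k →ₐ[k] A :=
    AlgHom.codRestrict ((killVar k 0).prod (killVar k 1)) A hmem with hΦ
  have hΦ0 : ∀ (F : MvPowerSeries (Fin 2) k) (n : ℕ),
      PowerSeries.coeff n ((Φ F : PowerSeries k × PowerSeries k).1)
        = MvPowerSeries.coeff (Finsupp.single 0 n) F := fun F n => by
    simp [hΦ, killVar, PowerSeries.coeff_mk]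
  have hΦ1 : ∀ (F : MvPowerSeries (Fin 2) k) (n : ℕ),
      PowerSeries.coeff n ((Φ F : PowerSeries k × PowerSeries k).2)
        = MvPowerSeries.coeff (Finsupp.single 1 n) F := fun F n => by
    simp [hΦ, killVar, PowerSeries.coeff_mk]
  -- surjectivity
  have hsurj : Function.Surjective Φ := by
    rintro ⟨⟨f, g⟩, hfg⟩
    rw [hA, AlgHom.mem_equalizer] at hfg
    simp only [AlgHom.comp_apply, hfst, hsnd, hconst] at hfg
    let G : MvPowerSeries (Fin 2) k := fun d => if d 1 = 0 then PowerSeries.coeff (d 0) f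
      else if d 0 = 0 then PowerSeries.coeff (d 1) g else 0
    refine ⟨G, ?_⟩
    apply Subtype.ext
    apply Prod.ext
    · apply PowerSeries.ext; intro n
      rw [hΦ0, MvPowerSeries.coeff_apply]
      simp [G, Finsupp.single_apply]
    · apply PowerSeries.ext; intro n
      rw [hΦ1, MvPowerSeries.coeff_apply]
      rcases eq_or_ne n 0 with rfl | hn
      · simpa [G] using hfg
      · simp [G, Finsupp.single_apply, hn]
  -- the monomial form of X 0 * X 1
  set e : Fin 2 →₀ ℕ := Finsupp.single 0 1 + Finsupp.single 1 1 with he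
  have hXX : (MvPowerSeries.X 0 : MvPowerSeries (Fin 2) k) * MvPowerSeries.X 1
      = MvPowerSeries.monomial e 1 := by
    rw [MvPowerSeries.X, MvPowerSeries.X, MvPowerSeries.monomial_mul_monomial, one_mul]
  -- the kernel
  have hker : RingHom.ker Φ =
      Ideal.span {(MvPowerSeries.X 0 : MvPowerSeries (Fin 2) k) * MvPowerSeries.X 1} := by
    ext F
    rw [RingHom.mem_ker, Ideal.mem_span_singleton]
    constructor
    · intro hF
      have h0 : ∀ n : ℕ, MvPowerSeries.coeff (Finsupp.single 0 n) F = 0 := fun n => by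
        rw [← hΦ0 F n, hF]; simp
      have h1 : ∀ n : ℕ, MvPowerSeries.coeff (Finsupp.single 1 n) F = 0 := fun n => by
        rw [← hΦ1 F n, hF]; simp
      let G : MvPowerSeries (Fin 2) k := fun d => MvPowerSeries.coeff (d + e) F
      refine ⟨G, ?_⟩
      apply MvPowerSeries.ext; intro d
      rw [hXX, MvPowerSeries.coeff_monomial_mul, one_mul]
      by_cases hle : e ≤ d
      · rw [if_pos hle]
        rw [show MvPowerSeries.coeff (d - e) G = MvPowerSeries.coeff (d - e + e) F from rfl,
          tsub_add_cancel_of_le hle]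
      · rw [if_neg hle]
        have hd : d 0 = 0 ∨ d 1 = 0 := by
          by_contra hcon
          push_neg at hcon
          exact hle (Finsupp.le_def.mpr fun i => by
            fin_cases i <;> simp [he, Finsupp.single_apply] <;> omega)
        rcases hd with h | h
        · have hd' : d = Finsupp.single 1 (d 1) := by
            ext i; fin_cases i <;> simp [Finsupp.single_apply, h]
          rw [hd']
          exact h1 _
        · have hd' : d = Finsupp.single 0 (d 0) := by
            ext i; fin_cases i <;> simp [Finsupp.single_apply, h]
          rw [hd']
          exact h0 _
    · rintro ⟨G, rfl⟩
      apply Subtype.ext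
      apply Prod.ext
      · apply PowerSeries.ext; intro n
        have hcond : ¬ e ≤ Finsupp.single (0 : Fin 2) n := fun hle => by
          have := Finsupp.le_def.mp hle 1
          simp [he, Finsupp.single_apply] at this
        rw [hΦ0, hXX, MvPowerSeries.coeff_monomial_mul, one_mul, if_neg hcond]
        simp
      · apply PowerSeries.ext; intro n
        have hcond : ¬ e ≤ Finsupp.single (1 : Fin 2) n := fun hle => by
          have := Finsupp.le_def.mp hle 0
          simp [he, Finsupp.single_apply] at this
        rw [hΦ1, hXX, MvPowerSeries.coeff_monomial_mul, one_mul, if_neg hcond]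
        simp
  exact ⟨((Ideal.quotientKerAlgEquivOfSurjective hsurj).symm.trans
    (Ideal.quotientEquivAlgOfEq k hker))⟩
end

section
/- Let (R, m, k) be a local ring with m = I ⊕ J for nonzero ideals I, J minimally generated by sequences x₁ (of length t) and x₂ (of length s) respectively, and let x = x₁ ∪ x₂. Then there are isomorphisms of DG R-algebras K^R(x) ⊗_R I ≅ (K^R(x₁) ⊗_R I) ⊗_R Λ R^s and K^R(x) ⊗_R J ≅ Λ R^t ⊗_R (K^R(x₂) ⊗_R J), where Λ R^s and Λ R^t carry the zero differential. -/
set_option maxHeartbeats 1000000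

open IsLocalRing

/-- The Koszul differential on the Koszul complex of `x : Fin e → R`, in the model where
elements are coefficient functions `Finset (Fin e) → R` (with respect to the standard
exterior-algebra basis `ω_Λ`), graded by the cardinality of the index set. -/
noncomputable def koszulD {R : Type*} [CommRing R] {e : ℕ} (x : Fin e → R) :
    (Finset (Fin e) → R) →ₗ[R] (Finset (Fin e) → R) where
  toFun c := fun Δ => ∑ i ∈ Δᶜ,
    (-1 : R) ^ (Δ.filter (· < i)).card * (x i * c (insert i Δ))
  map_add' c c' := by
    funext Δ
    simp [mul_add, Finset.sum_add_distrib]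
  map_smul' r c := by
    funext Δ
    simp [Finset.mul_sum, mul_left_comm]

/-- The exterior (wedge) product on the Koszul complex in the coefficient-function
model: `(c ∧ c') Λ = ∑_{Δ ⊆ Λ} ± c Δ · c' (Λ \ Δ)`, with the usual shuffle signs. -/
noncomputable def koszulWedge {R : Type*} [CommRing R] {e : ℕ} :
    (Finset (Fin e) → R) →ₗ[R] (Finset (Fin e) → R) →ₗ[R] (Finset (Fin e) → R) :=
  LinearMap.mk₂ R
    (fun c c' => fun Λ => ∑ Δ ∈ Λ.powerset,
      (-1 : R) ^ (((Δ ×ˢ (Λ \ Δ)).filter (fun p => p.2 < p.1)).card) *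
        (c Δ * c' (Λ \ Δ)))
    (by intro c₁ c₂ c'; funext Λ; simp [add_mul, mul_add, Finset.sum_add_distrib])
    (by intro r c c'; funext Λ; simp [Finset.mul_sum, mul_left_comm, mul_assoc])
    (by intro c c₁ c₂; funext Λ; simp [mul_add, Finset.sum_add_distrib])
    (by intro r c c'; funext Λ; simp [Finset.mul_sum, mul_left_comm, mul_assoc])

/-- The differential on `K^R(x₁) ⊗ Λ R^s`, in the model of coefficient functions on
`Finset (Fin t) × Finset (Fin s)`: the Koszul differential of `x₁` acting on the first
component only (`Λ R^s` carries the zero differential). -/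
noncomputable def koszulDFst {R : Type*} [CommRing R] {t s : ℕ} (x₁ : Fin t → R) :
    (Finset (Fin t) × Finset (Fin s) → R) →ₗ[R] (Finset (Fin t) × Finset (Fin s) → R) where
  toFun c := fun Δ => ∑ i ∈ Δ.1ᶜ,
    (-1 : R) ^ (Δ.1.filter (· < i)).card * (x₁ i * c (insert i Δ.1, Δ.2))
  map_add' c c' := by
    funext Δ
    simp [mul_add, Finset.sum_add_distrib]
  map_smul' r c := by
    funext Δ
    simp [Finset.mul_sum, mul_left_comm]

/-- The differential on `Λ R^t ⊗ K^R(x₂)`, in the model of coefficient functions on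
`Finset (Fin t) × Finset (Fin s)`: the Koszul differential of `x₂` acting on the second
component only, with the Koszul sign `(-1)^{degree of the first factor}` (`Λ R^t`
carries the zero differential). -/
noncomputable def koszulDSnd {R : Type*} [CommRing R] {t s : ℕ} (x₂ : Fin s → R) :
    (Finset (Fin t) × Finset (Fin s) → R) →ₗ[R] (Finset (Fin t) × Finset (Fin s) → R) where
  toFun c := fun Δ => (-1 : R) ^ Δ.1.card * ∑ j ∈ Δ.2ᶜ,
    (-1 : R) ^ (Δ.2.filter (· < j)).card * (x₂ j * c (Δ.1, insert j Δ.2))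
  map_add' c c' := by
    funext Δ
    simp [mul_add, Finset.sum_add_distrib]
  map_smul' r c := by
    funext Δ
    simp [Finset.mul_sum, mul_left_comm]

/-- The multiplication on the graded tensor product of the two Koszul exterior algebras,
in the model of coefficient functions on `Finset (Fin t) × Finset (Fin s)`, with the
sign rule for graded tensor products. -/
noncomputable def pairWedge {R : Type*} [CommRing R] {t s : ℕ} :
    (Finset (Fin t) × Finset (Fin s) → R) →ₗ[R]
      (Finset (Fin t) × Finset (Fin s) → R) →ₗ[R] (Finset (Fin t) × Finset (Fin s) → R) :=
  LinearMap.mk₂ R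
    (fun c c' => fun Λ => ∑ Δ₁ ∈ Λ.1.powerset, ∑ Δ₂ ∈ Λ.2.powerset,
      (-1 : R) ^ ((Λ.1 \ Δ₁).card * Δ₂.card) *
      ((-1 : R) ^ (((Δ₁ ×ˢ (Λ.1 \ Δ₁)).filter (fun p => p.2 < p.1)).card) *
       ((-1 : R) ^ (((Δ₂ ×ˢ (Λ.2 \ Δ₂)).filter (fun p => p.2 < p.1)).card) *
        (c (Δ₁, Δ₂) * c' (Λ.1 \ Δ₁, Λ.2 \ Δ₂)))))
    (by intro c₁ c₂ c'; funext Λ; simp [add_mul, mul_add, Finset.sum_add_distrib])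
    (by intro r c c'; funext Λ; simp [Finset.mul_sum, mul_left_comm, mul_assoc])
    (by intro c c₁ c₂; funext Λ; simp [mul_add, Finset.sum_add_distrib])
    (by intro r c c'; funext Λ; simp [Finset.mul_sum, mul_left_comm, mul_assoc])

open Finset

variable {t s : ℕ}

/-- join a pair of finsets into a finset of `Fin (t+s)`. -/
noncomputable def jn (p : Finset (Fin t) × Finset (Fin s)) : Finset (Fin (t + s)) :=
  (p.1.disjSum p.2).map finSumFinEquiv.toEmbedding

noncomputable def sp (Δ : Finset (Fin (t + s))) : Finset (Fin t) × Finset (Fin s) :=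
  ((Δ.map finSumFinEquiv.symm.toEmbedding).toLeft, (Δ.map finSumFinEquiv.symm.toEmbedding).toRight)

lemma sp_jn (p : Finset (Fin t) × Finset (Fin s)) : sp (jn p) = p := by
  have : (jn p).map finSumFinEquiv.symm.toEmbedding = p.1.disjSum p.2 := by
    rw [jn, Finset.map_map]
    have : (finSumFinEquiv (m := t) (n := s)).toEmbedding.trans finSumFinEquiv.symm.toEmbedding
        = Function.Embedding.refl _ := by
      ext x; simp
    rw [this, Finset.map_refl]
  simp [sp, this]

lemma jn_sp (Δ : Finset (Fin (t + s))) : jn (sp Δ) = Δ := by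
  rw [sp, jn]
  simp only [Finset.toLeft_disjSum_toRight]
  rw [Finset.map_map]
  have : (finSumFinEquiv (m := t) (n := s)).symm.toEmbedding.trans finSumFinEquiv.toEmbedding
      = Function.Embedding.refl _ := by
    ext x; simp
  rw [this, Finset.map_refl]

lemma mem_jn {p : Finset (Fin t) × Finset (Fin s)} {x : Fin (t + s)} :
    x ∈ jn p ↔ (∃ a ∈ p.1, Fin.castAdd s a = x) ∨ ∃ b ∈ p.2, Fin.natAdd t b = x := by
  simp only [jn, Finset.mem_map, Finset.mem_disjSum, Equiv.coe_toEmbedding]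
  constructor
  · rintro ⟨y, (⟨a, ha, rfl⟩ | ⟨b, hb, rfl⟩), rfl⟩
    · exact Or.inl ⟨a, ha, by simp⟩
    · exact Or.inr ⟨b, hb, by simp⟩
  · rintro (⟨a, ha, rfl⟩ | ⟨b, hb, rfl⟩)
    · exact ⟨Sum.inl a, Or.inl ⟨a, ha, rfl⟩, by simp⟩
    · exact ⟨Sum.inr b, Or.inr ⟨b, hb, rfl⟩, by simp⟩

lemma castAdd_mem_jn {p : Finset (Fin t) × Finset (Fin s)} {a : Fin t} :
    Fin.castAdd s a ∈ jn p ↔ a ∈ p.1 := by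
  rw [mem_jn]
  constructor
  · rintro (⟨a', ha', h⟩ | ⟨b, hb, h⟩)
    · have h2 := congrArg Fin.val h
      simp only [Fin.coe_castAdd] at h2
      exact (Fin.val_injective h2) ▸ ha'
    · have h2 := congrArg Fin.val h
      simp only [Fin.coe_castAdd, Fin.coe_natAdd] at h2
      have := a.isLt
      omega
  · exact fun h => Or.inl ⟨a, h, rfl⟩

lemma natAdd_mem_jn {p : Finset (Fin t) × Finset (Fin s)} {b : Fin s} :
    Fin.natAdd t b ∈ jn p ↔ b ∈ p.2 := by
  rw [mem_jn]
  constructor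
  · rintro (⟨a', ha', h⟩ | ⟨b', hb', h⟩)
    · have h2 := congrArg Fin.val h
      simp only [Fin.coe_castAdd, Fin.coe_natAdd] at h2
      have := a'.isLt
      omega
    · have h2 := congrArg Fin.val h
      simp only [Fin.coe_natAdd, add_right_inj] at h2
      exact (Fin.val_injective h2) ▸ hb'
  · exact fun h => Or.inr ⟨b, h, rfl⟩

@[simp] lemma castAdd_lt_castAdd {a a' : Fin t} :
    Fin.castAdd s a < Fin.castAdd s a' ↔ a < a' := by
  simp only [Fin.lt_def, Fin.coe_castAdd]

@[simp] lemma natAdd_lt_natAdd {b b' : Fin s} :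
    Fin.natAdd t b < Fin.natAdd t b' ↔ b < b' := by
  simp only [Fin.lt_def, Fin.coe_natAdd]
  omega

@[simp] lemma castAdd_lt_natAdd {a : Fin t} {b : Fin s} :
    Fin.castAdd s a < Fin.natAdd t b := by
  have := a.isLt
  simp only [Fin.lt_def, Fin.coe_castAdd, Fin.coe_natAdd]
  omega

@[simp] lemma not_natAdd_lt_castAdd {a : Fin t} {b : Fin s} :
    ¬ Fin.natAdd t b < Fin.castAdd s a := by
  have := a.isLt
  simp only [Fin.lt_def, Fin.coe_castAdd, Fin.coe_natAdd]
  omega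

@[simp] lemma castAdd_inj' {a a' : Fin t} :
    Fin.castAdd s a = Fin.castAdd s a' ↔ a = a' := Fin.castAdd_inj

@[simp] lemma natAdd_inj' {b b' : Fin s} :
    Fin.natAdd t b = Fin.natAdd t b' ↔ b = b' := by
  constructor
  · intro h
    have h2 : (Fin.natAdd t b : Fin (t + s)).val = (Fin.natAdd t b' : Fin (t + s)).val :=
      congrArg Fin.val h
    simp only [Fin.coe_natAdd, add_right_inj] at h2
    exact Fin.ext h2
  · rintro rfl; rfl

@[simp] lemma castAdd_ne_natAdd {a : Fin t} {b : Fin s} :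
    Fin.castAdd s a ≠ Fin.natAdd t b := by
  intro h
  have h2 := congrArg Fin.val h
  have := a.isLt
  simp only [Fin.coe_castAdd, Fin.coe_natAdd] at h2
  omega

@[simp] lemma natAdd_ne_castAdd {a : Fin t} {b : Fin s} :
    Fin.natAdd t b ≠ Fin.castAdd s a := fun h => castAdd_ne_natAdd h.symm

lemma jn_sdiff (p q : Finset (Fin t) × Finset (Fin s)) :
    jn (p.1 \ q.1, p.2 \ q.2) = jn p \ jn q := by
  ext x
  obtain ⟨y, rfl⟩ := finSumFinEquiv.surjective x
  cases y <;>
    simp [finSumFinEquiv_apply_left, finSumFinEquiv_apply_right,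
      castAdd_mem_jn, natAdd_mem_jn]

lemma jn_compl (p : Finset (Fin t) × Finset (Fin s)) :
    jn (p.1ᶜ, p.2ᶜ) = (jn p)ᶜ := by
  ext x
  obtain ⟨y, rfl⟩ := finSumFinEquiv.surjective x
  cases y <;>
    simp [finSumFinEquiv_apply_left, finSumFinEquiv_apply_right,
      castAdd_mem_jn, natAdd_mem_jn]

lemma jn_insert_left (p : Finset (Fin t) × Finset (Fin s)) (i : Fin t) :
    jn (insert i p.1, p.2) = insert (Fin.castAdd s i) (jn p) := by
  ext x
  obtain ⟨y, rfl⟩ := finSumFinEquiv.surjective x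
  cases y <;>
    simp [finSumFinEquiv_apply_left, finSumFinEquiv_apply_right,
      castAdd_mem_jn, natAdd_mem_jn]

lemma jn_insert_right (p : Finset (Fin t) × Finset (Fin s)) (j : Fin s) :
    jn (p.1, insert j p.2) = insert (Fin.natAdd t j) (jn p) := by
  ext x
  obtain ⟨y, rfl⟩ := finSumFinEquiv.surjective x
  cases y <;>
    simp [finSumFinEquiv_apply_left, finSumFinEquiv_apply_right,
      castAdd_mem_jn, natAdd_mem_jn]

lemma jn_subset_jn {p q : Finset (Fin t) × Finset (Fin s)} :
    jn p ⊆ jn q ↔ p.1 ⊆ q.1 ∧ p.2 ⊆ q.2 := by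
  constructor
  · intro h
    exact ⟨fun a ha => castAdd_mem_jn.mp (h (castAdd_mem_jn.mpr ha)),
      fun b hb => natAdd_mem_jn.mp (h (natAdd_mem_jn.mpr hb))⟩
  · rintro ⟨h1, h2⟩ x hx
    obtain ⟨y, rfl⟩ := finSumFinEquiv.surjective x
    cases y with
    | inl a =>
      rw [finSumFinEquiv_apply_left] at *
      exact castAdd_mem_jn.mpr (h1 (castAdd_mem_jn.mp hx))
    | inr b =>
      rw [finSumFinEquiv_apply_right] at *
      exact natAdd_mem_jn.mpr (h2 (natAdd_mem_jn.mp hx))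

lemma card_jn (p : Finset (Fin t) × Finset (Fin s)) :
    (jn p).card = p.1.card + p.2.card := by
  simp [jn]

lemma sum_jn {M : Type*} [AddCommMonoid M] (p : Finset (Fin t) × Finset (Fin s))
    (f : Fin (t + s) → M) :
    ∑ x ∈ jn p, f x = ∑ a ∈ p.1, f (Fin.castAdd s a) + ∑ b ∈ p.2, f (Fin.natAdd t b) := by
  rw [jn, Finset.sum_map, Finset.sum_disjSum]
  simp

lemma sum_powerset_jn {M : Type*} [AddCommMonoid M] (Λ : Finset (Fin t) × Finset (Fin s))
    (f : Finset (Fin (t + s)) → M) :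
    ∑ Δ ∈ (jn Λ).powerset, f Δ
      = ∑ Δ₁ ∈ Λ.1.powerset, ∑ Δ₂ ∈ Λ.2.powerset, f (jn (Δ₁, Δ₂)) := by
  rw [show (∑ Δ₁ ∈ Λ.1.powerset, ∑ Δ₂ ∈ Λ.2.powerset, f (jn (Δ₁, Δ₂)))
      = ∑ q ∈ Λ.1.powerset ×ˢ Λ.2.powerset, f (jn q) from
    (Finset.sum_product _ _ (fun q => f (jn q))).symm]
  refine Finset.sum_bij' (fun Δ _ => sp Δ) (fun q _ => jn q) ?_ ?_ ?_ ?_ ?_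
  · intro Δ hΔ
    rw [Finset.mem_powerset] at hΔ
    rw [Finset.mem_product, Finset.mem_powerset, Finset.mem_powerset]
    have h1 : (sp Δ).1 ⊆ (sp (jn Λ)).1 :=
      Finset.toLeft_subset_toLeft (Finset.map_subset_map.mpr hΔ)
    have h2 : (sp Δ).2 ⊆ (sp (jn Λ)).2 :=
      Finset.toRight_subset_toRight (Finset.map_subset_map.mpr hΔ)
    rw [sp_jn] at h1 h2
    exact ⟨h1, h2⟩
  · intro q hq
    rw [Finset.mem_product, Finset.mem_powerset, Finset.mem_powerset] at hq
    rw [Finset.mem_powerset]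
    exact jn_subset_jn.mpr ⟨hq.1, hq.2⟩
  · intro Δ _; exact jn_sp Δ
  · intro q _; exact sp_jn q
  · intro Δ _; rw [jn_sp]

lemma sign_card (p q : Finset (Fin t) × Finset (Fin s)) :
    (((jn p) ×ˢ (jn q)).filter (fun z => z.2 < z.1)).card
      = ((p.1 ×ˢ q.1).filter (fun z => z.2 < z.1)).card
        + ((p.2 ×ˢ q.2).filter (fun z => z.2 < z.1)).card
        + p.2.card * q.1.card := by
  rw [Finset.card_filter, Finset.card_filter, Finset.card_filter,
    Finset.sum_product, Finset.sum_product, Finset.sum_product,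
    sum_jn]
  simp only [sum_jn, castAdd_lt_castAdd, natAdd_lt_natAdd, castAdd_lt_natAdd,
    not_natAdd_lt_castAdd, if_true, if_false, Finset.sum_const, smul_eq_mul, mul_one, mul_zero,
    Finset.sum_add_distrib, Finset.sum_const_zero, add_zero, zero_add]
  ring

lemma filter_lt_castAdd (p : Finset (Fin t) × Finset (Fin s)) (i : Fin t) :
    ((jn p).filter (· < Fin.castAdd s i)).card = (p.1.filter (· < i)).card := by
  rw [Finset.card_filter, Finset.card_filter, sum_jn]
  simp

lemma filter_lt_natAdd (p : Finset (Fin t) × Finset (Fin s)) (j : Fin s) :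
    ((jn p).filter (· < Fin.natAdd t j)).card = p.1.card + (p.2.filter (· < j)).card := by
  rw [Finset.card_filter, Finset.card_filter, sum_jn]
  simp only [castAdd_lt_natAdd, natAdd_lt_natAdd, if_true, Finset.sum_const, smul_eq_mul,
    mul_one]

/-- Let `(R, m, k)` be a local ring with `m = I ⊕ J` for nonzero ideals `I`, `J`
minimally generated by `x₁` (of length `t`) and `x₂` (of length `s`), and let
`x = x₁ ∪ x₂`.  Then `K^R(x) ⊗ I ≅ (K^R(x₁) ⊗ I) ⊗ Λ R^s` and
`K^R(x) ⊗ J ≅ Λ R^t ⊗ (K^R(x₂) ⊗ J)` as DG algebras (without unity): there are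
multiplicative `R`-linear isomorphisms of the Koszul exterior algebras that restrict to
isomorphisms of the coefficient subcomplexes with values in `I` (resp. `J`) and
intertwine the differentials there. -/
theorem stmt11 {R : Type*} [CommRing R] [IsNoetherianRing R] [IsLocalRing R]
    (I J : Ideal R) (hI : I ≠ ⊥) (hJ : J ≠ ⊥)
    (hsum : I ⊔ J = maximalIdeal R) (hdisj : I ⊓ J = ⊥)
    {t s : ℕ} (x₁ : Fin t → R) (x₂ : Fin s → R)
    (hx₁ : Ideal.span (Set.range x₁) = I)
    (hx₁min : ∀ t' : ℕ, t' < t → ¬∃ g : Fin t' → R, Ideal.span (Set.range g) = I)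
    (hx₂ : Ideal.span (Set.range x₂) = J)
    (hx₂min : ∀ s' : ℕ, s' < s → ¬∃ g : Fin s' → R, Ideal.span (Set.range g) = J) :
    (∃ φ : (Finset (Fin (t + s)) → R) ≃ₗ[R] (Finset (Fin t) × Finset (Fin s) → R),
      (∀ c c', φ (koszulWedge c c') = pairWedge (φ c) (φ c')) ∧
      (∀ c, (∀ Δ, c Δ ∈ I) ↔ ∀ p, φ c p ∈ I) ∧
      (∀ c : Finset (Fin (t + s)) → R, (∀ Δ, c Δ ∈ I) →
        φ (koszulD (Fin.append x₁ x₂) c) = koszulDFst x₁ (φ c))) ∧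
    (∃ ψ : (Finset (Fin (t + s)) → R) ≃ₗ[R] (Finset (Fin t) × Finset (Fin s) → R),
      (∀ c c', ψ (koszulWedge c c') = pairWedge (ψ c) (ψ c')) ∧
      (∀ c, (∀ Δ, c Δ ∈ J) ↔ ∀ p, ψ c p ∈ J) ∧
      (∀ c : Finset (Fin (t + s)) → R, (∀ Δ, c Δ ∈ J) →
        ψ (koszulD (Fin.append x₁ x₂) c) = koszulDSnd x₂ (ψ c))) := by
  classical
  have hx₁I : ∀ i, x₁ i ∈ I := fun i => hx₁ ▸ Ideal.subset_span ⟨i, rfl⟩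
  have hx₂J : ∀ j, x₂ j ∈ J := fun j => hx₂ ▸ Ideal.subset_span ⟨j, rfl⟩
  have hmul0 : ∀ a b : R, a ∈ I → b ∈ J → a * b = 0 := by
    intro a b ha hb
    have h1 : a * b ∈ I ⊓ J := ⟨I.mul_mem_right b ha, J.mul_mem_left a hb⟩
    rw [hdisj] at h1
    simpa using h1
  let φ : (Finset (Fin (t + s)) → R) ≃ₗ[R] (Finset (Fin t) × Finset (Fin s) → R) :=
  { toFun := fun c q => c (jn q)
    invFun := fun c Δ => c (sp Δ)
    map_add' := fun _ _ => rfl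
    map_smul' := fun _ _ => rfl
    left_inv := fun c => by funext Δ; simp only; rw [jn_sp]
    right_inv := fun c => by funext q; simp only; rw [sp_jn] }
  have hφ : ∀ (c : Finset (Fin (t + s)) → R) q, φ c q = c (jn q) := fun _ _ => rfl
  have hmult : ∀ c c', φ (koszulWedge c c') = pairWedge (φ c) (φ c') := by
    intro c c'
    funext q
    show koszulWedge c c' (jn q) = _
    simp only [koszulWedge, pairWedge, LinearMap.mk₂_apply, hφ]
    rw [sum_powerset_jn]
    refine Finset.sum_congr rfl fun Δ₁ h1 => Finset.sum_congr rfl fun Δ₂ h2 => ?_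
    rw [show jn q \ jn (Δ₁, Δ₂) = jn (q.1 \ Δ₁, q.2 \ Δ₂) from (jn_sdiff q (Δ₁, Δ₂)).symm]
    rw [sign_card (Δ₁, Δ₂) (q.1 \ Δ₁, q.2 \ Δ₂)]
    rw [pow_add, pow_add]
    ring
  have hmem : ∀ (K : Ideal R) (c : Finset (Fin (t + s)) → R),
      (∀ Δ, c Δ ∈ K) ↔ ∀ p, φ c p ∈ K := by
    intro K c
    constructor
    · intro h q; exact h _
    · intro h Δ
      have := h (sp Δ)
      rwa [hφ, jn_sp] at this
  have hdiffI : ∀ c : Finset (Fin (t + s)) → R, (∀ Δ, c Δ ∈ I) →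
      φ (koszulD (Fin.append x₁ x₂) c) = koszulDFst x₁ (φ c) := by
    intro c hc
    funext q
    show koszulD (Fin.append x₁ x₂) c (jn q) = _
    simp only [koszulD, koszulDFst, LinearMap.coe_mk, AddHom.coe_mk, hφ]
    rw [show (jn q)ᶜ = jn (q.1ᶜ, q.2ᶜ) from (jn_compl q).symm, sum_jn]
    have h2 : ∀ b ∈ q.2ᶜ, (-1 : R) ^ ((jn q).filter (· < Fin.natAdd t b)).card *
        (Fin.append x₁ x₂ (Fin.natAdd t b) * c (insert (Fin.natAdd t b) (jn q))) = 0 := by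
      intro b _
      rw [Fin.append_right, mul_comm (x₂ b), hmul0 _ _ (hc _) (hx₂J b), mul_zero]
    rw [Finset.sum_eq_zero h2, add_zero]
    refine Finset.sum_congr rfl fun a ha => ?_
    rw [Fin.append_left, filter_lt_castAdd,
      show insert (Fin.castAdd s a) (jn q) = jn (insert a q.1, q.2) from
        (jn_insert_left q a).symm]
  have hdiffJ : ∀ c : Finset (Fin (t + s)) → R, (∀ Δ, c Δ ∈ J) →
      φ (koszulD (Fin.append x₁ x₂) c) = koszulDSnd x₂ (φ c) := by
    intro c hc
    funext q
    show koszulD (Fin.append x₁ x₂) c (jn q) = _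
    simp only [koszulD, koszulDSnd, LinearMap.coe_mk, AddHom.coe_mk, hφ]
    rw [show (jn q)ᶜ = jn (q.1ᶜ, q.2ᶜ) from (jn_compl q).symm, sum_jn]
    have h1 : ∀ a ∈ q.1ᶜ, (-1 : R) ^ ((jn q).filter (· < Fin.castAdd s a)).card *
        (Fin.append x₁ x₂ (Fin.castAdd s a) * c (insert (Fin.castAdd s a) (jn q))) = 0 := by
      intro a _
      rw [Fin.append_left, hmul0 _ _ (hx₁I a) (hc _), mul_zero]
    rw [Finset.sum_eq_zero h1, zero_add, Finset.mul_sum]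
    refine Finset.sum_congr rfl fun b hb => ?_
    rw [Fin.append_right, filter_lt_natAdd,
      show insert (Fin.natAdd t b) (jn q) = jn (q.1, insert b q.2) from
        (jn_insert_right q b).symm, pow_add]
    ring
  exact ⟨⟨φ, hmult, hmem I, hdiffI⟩, ⟨φ, hmult, hmem J, hdiffJ⟩⟩
end

section
/- Let k be a field, r ≥ 2, and let T_i = k[[X₁^{(i)},...,X_{n_i}^{(i)}]] for 1 ≤ i ≤ r. Then the iterated fiber product T₁ ×_k ⋯ ×_k T_r is isomorphic as a k-algebra to k[[all variables]]/𝔍, where 𝔍 is the ideal generated by all products of a variable from block i with a variable from block j for i ≠ j. -/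
open MvPowerSeries Finsupp

namespace Stmt14Aux

variable {k : Type*} [CommRing k] {r : ℕ} {n : Fin r → ℕ}

/-- The embedding of block `i` variables into the sigma type of all variables. -/
def emb (n : Fin r → ℕ) (i : Fin r) : Fin (n i) ↪ ((j : Fin r) × Fin (n j)) where
  toFun a := ⟨i, a⟩
  inj' := fun a b h => by simpa using h

/-- The restriction of a big exponent to block `i`. -/
noncomputable def restr (i : Fin r) (m : ((j : Fin r) × Fin (n j)) →₀ ℕ) : Fin (n i) →₀ ℕ :=
  Finsupp.comapDomain (emb n i) m (emb n i).injective.injOn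

lemma restr_embDomain (i : Fin r) (d : Fin (n i) →₀ ℕ) :
    restr i (Finsupp.embDomain (emb n i) d) = d := by
  ext a
  simp [restr, Finsupp.comapDomain_apply, Finsupp.embDomain_apply]

lemma embDomain_restr {i : Fin r} {m : ((j : Fin r) × Fin (n j)) →₀ ℕ}
    (h : ∀ s ∈ m.support, s.1 = i) :
    Finsupp.embDomain (emb n i) (restr i m) = m := by
  refine Finsupp.embDomain_comapDomain ?_
  intro s hs
  obtain ⟨s1, s2⟩ := s
  have : s1 = i := h _ hs
  subst this
  exact ⟨s2, rfl⟩

lemma support_subset_range {i : Fin r} {d : Fin (n i) →₀ ℕ}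
    {m : ((j : Fin r) × Fin (n j)) →₀ ℕ} (h : ∀ s, m s ≤ Finsupp.embDomain (emb n i) d s) :
    ∀ s ∈ m.support, s.1 = i := by
  intro s hs
  have hm : m s ≠ 0 := Finsupp.mem_support_iff.1 hs
  have : Finsupp.embDomain (emb n i) d s ≠ 0 := fun h0 => hm (Nat.le_zero.1 (h0 ▸ h s))
  have : s ∈ (Finsupp.embDomain (emb n i) d).support := Finsupp.mem_support_iff.2 this
  rw [Finsupp.support_embDomain] at this
  obtain ⟨a, _, rfl⟩ := Finset.mem_map.1 this
  rfl

/-- Restriction of a power series on all variables to block `i`. -/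
noncomputable def blockFun (i : Fin r) (f : MvPowerSeries ((j : Fin r) × Fin (n j)) k) :
    MvPowerSeries (Fin (n i)) k :=
  fun d => MvPowerSeries.coeff (Finsupp.embDomain (emb n i) d) f

lemma coeff_blockFun (i : Fin r) (f : MvPowerSeries ((j : Fin r) × Fin (n j)) k)
    (d : Fin (n i) →₀ ℕ) :
    MvPowerSeries.coeff d (blockFun i f) =
      MvPowerSeries.coeff (Finsupp.embDomain (emb n i) d) f := rfl

lemma blockFun_mul (i : Fin r) (f g : MvPowerSeries ((j : Fin r) × Fin (n j)) k) :
    blockFun i (f * g) = blockFun i f * blockFun i g := by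
  classical
  ext d
  rw [coeff_blockFun, MvPowerSeries.coeff_mul, MvPowerSeries.coeff_mul]
  refine Finset.sum_bij'
    (fun p hp => (restr i p.1, restr i p.2))
    (fun p hp => (Finsupp.embDomain (emb n i) p.1, Finsupp.embDomain (emb n i) p.2))
    ?_ ?_ ?_ ?_ ?_
  · intro p hp
    rw [Finset.HasAntidiagonal.mem_antidiagonal] at hp ⊢
    have h1 : ∀ s ∈ p.1.support, s.1 = i := by
      refine support_subset_range (d := d) fun s => ?_
      rw [← hp]; exact le_self_add
    have h2 : ∀ s ∈ p.2.support, s.1 = i := by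
      refine support_subset_range (d := d) fun s => ?_
      rw [← hp]; exact le_add_self
    apply Finsupp.embDomain_injective (emb n i)
    rw [Finsupp.embDomain_add, embDomain_restr h1, embDomain_restr h2, hp]
  · intro p hp
    rw [Finset.HasAntidiagonal.mem_antidiagonal] at hp ⊢
    rw [← Finsupp.embDomain_add, hp]
  · intro p hp
    rw [Finset.HasAntidiagonal.mem_antidiagonal] at hp
    have h1 : ∀ s ∈ p.1.support, s.1 = i := by
      refine support_subset_range (d := d) fun s => ?_
      rw [← hp]; exact le_self_add
    have h2 : ∀ s ∈ p.2.support, s.1 = i := by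
      refine support_subset_range (d := d) fun s => ?_
      rw [← hp]; exact le_add_self
    exact Prod.ext (embDomain_restr h1) (embDomain_restr h2)
  · intro p hp
    exact Prod.ext (restr_embDomain i p.1) (restr_embDomain i p.2)
  · intro p hp
    rw [Finset.HasAntidiagonal.mem_antidiagonal] at hp
    have h1 : ∀ s ∈ p.1.support, s.1 = i := by
      refine support_subset_range (d := d) fun s => ?_
      rw [← hp]; exact le_self_add
    have h2 : ∀ s ∈ p.2.support, s.1 = i := by
      refine support_subset_range (d := d) fun s => ?_
      rw [← hp]; exact le_add_self
    simp only [coeff_blockFun]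
    rw [embDomain_restr h1, embDomain_restr h2]

/-- Restriction of a power series on all variables to block `i`, as an algebra
homomorphism. -/
noncomputable def blockHom (i : Fin r) :
    MvPowerSeries ((j : Fin r) × Fin (n j)) k →ₐ[k] MvPowerSeries (Fin (n i)) k where
  toFun := blockFun i
  map_one' := by
    classical
    ext d
    rw [coeff_blockFun, MvPowerSeries.coeff_one, MvPowerSeries.coeff_one]
    simp [Finsupp.embDomain_eq_zero]
  map_mul' := blockFun_mul i
  map_zero' := rfl
  map_add' := fun f g => by
    ext d
    rw [coeff_blockFun, map_add, map_add, coeff_blockFun, coeff_blockFun]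
  commutes' := fun a => by
    classical
    ext d
    rw [coeff_blockFun]
    simp only [MvPowerSeries.algebraMap_apply, Algebra.algebraMap_self, RingHom.id_apply]
    rw [MvPowerSeries.coeff_C, MvPowerSeries.coeff_C]
    simp [Finsupp.embDomain_eq_zero]

open Classical in
/-- Picks a pair of variables in distinct blocks both dividing a given monomial, if one
exists. -/
noncomputable def pick (m : ((j : Fin r) × Fin (n j)) →₀ ℕ) :
    Option (((j : Fin r) × Fin (n j)) × ((j : Fin r) × Fin (n j))) :=
  if h : ∃ p : ((j : Fin r) × Fin (n j)) × ((j : Fin r) × Fin (n j)),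
      p.1 ∈ m.support ∧ p.2 ∈ m.support ∧ p.1.1 ≠ p.2.1 then some h.choose else none

open Classical in
/-- The cofactor series used to exhibit a kernel element as a member of the span. -/
noncomputable def gAux (f : MvPowerSeries ((j : Fin r) × Fin (n j)) k)
    (p : ((j : Fin r) × Fin (n j)) × ((j : Fin r) × Fin (n j))) :
    MvPowerSeries ((j : Fin r) × Fin (n j)) k :=
  fun m' => if pick (m' + Finsupp.single p.1 1 + Finsupp.single p.2 1) = some p then
    MvPowerSeries.coeff (m' + Finsupp.single p.1 1 + Finsupp.single p.2 1) f else 0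

open Classical in
lemma coeff_gAux (f : MvPowerSeries ((j : Fin r) × Fin (n j)) k) (p) (m') :
    MvPowerSeries.coeff m' (gAux f p) =
      if pick (m' + Finsupp.single p.1 1 + Finsupp.single p.2 1) = some p then
        MvPowerSeries.coeff (m' + Finsupp.single p.1 1 + Finsupp.single p.2 1) f else 0 := rfl

lemma ker_subset_span (hr : 0 < r) (f : MvPowerSeries ((j : Fin r) × Fin (n j)) k)
    (hf : ∀ (i : Fin r) (d : Fin (n i) →₀ ℕ),
      MvPowerSeries.coeff (Finsupp.embDomain (emb n i) d) f = 0) :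
    f ∈ Ideal.span {p : MvPowerSeries ((i : Fin r) × Fin (n i)) k |
      ∃ (i j : Fin r) (a : Fin (n i)) (b : Fin (n j)), i ≠ j ∧
        p = MvPowerSeries.X ⟨i, a⟩ * MvPowerSeries.X ⟨j, b⟩} := by
  classical
  set P : Finset (((j : Fin r) × Fin (n j)) × ((j : Fin r) × Fin (n j))) :=
    Finset.univ.filter (fun p => p.1.1 ≠ p.2.1) with hP
  have key : f = ∑ p ∈ P, gAux f p * (MvPowerSeries.X p.1 * MvPowerSeries.X p.2) := by
    ext m
    rw [map_sum]
    have hXX : ∀ p : ((j : Fin r) × Fin (n j)) × ((j : Fin r) × Fin (n j)),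
        (MvPowerSeries.X p.1 * MvPowerSeries.X p.2 :
        MvPowerSeries ((j : Fin r) × Fin (n j)) k) =
        MvPowerSeries.monomial (Finsupp.single p.1 1 + Finsupp.single p.2 1) 1 := by
      intro p
      rw [MvPowerSeries.X, MvPowerSeries.X, MvPowerSeries.monomial_mul_monomial, one_mul]
    by_cases hm : ∃ p : ((j : Fin r) × Fin (n j)) × ((j : Fin r) × Fin (n j)),
        p.1 ∈ m.support ∧ p.2 ∈ m.support ∧ p.1.1 ≠ p.2.1
    · -- mixed case
      obtain ⟨q, hpick, hc1, hc2, hc3⟩ :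
          ∃ q, pick m = some q ∧ q.1 ∈ m.support ∧ q.2 ∈ m.support ∧ q.1.1 ≠ q.2.1 :=
        ⟨hm.choose, dif_pos hm, hm.choose_spec⟩
      have hqP : q ∈ P := Finset.mem_filter.2 ⟨Finset.mem_univ _, hc3⟩
      have hw₀ : Finsupp.single q.1 1 + Finsupp.single q.2 1 ≤ m := by
        refine Finsupp.le_def.2 fun s => ?_
        rcases eq_or_ne s q.1 with rfl | h1
        · have hne : q.2 ≠ q.1 := fun h => hc3 (congrArg Sigma.fst h).symm
          have h1le := Nat.one_le_iff_ne_zero.2 (Finsupp.mem_support_iff.1 hc1)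
          simpa [Finsupp.single_apply, hne] using h1le
        · rcases eq_or_ne s q.2 with rfl | h2
          · have h1le := Nat.one_le_iff_ne_zero.2 (Finsupp.mem_support_iff.1 hc2)
            simpa [Finsupp.single_apply, Ne.symm h1] using h1le
          · simp [Finsupp.single_apply, Ne.symm h1, Ne.symm h2]
      rw [Finset.sum_eq_single q]
      · rw [hXX, MvPowerSeries.coeff_mul_monomial, if_pos hw₀, coeff_gAux, add_assoc,
          tsub_add_cancel_of_le hw₀, if_pos hpick, mul_one]
      · intro p hpP hne
        rw [hXX, MvPowerSeries.coeff_mul_monomial]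
        split_ifs with hle
        · rw [coeff_gAux, add_assoc, tsub_add_cancel_of_le hle, if_neg, zero_mul]
          rw [hpick]
          exact fun h => hne (Option.some_injective _ h).symm
        · rfl
      · intro h
        exact absurd hqP h
    · -- pure case
      have hpick : pick m = none := dif_neg hm
      have hf0 : MvPowerSeries.coeff m f = 0 := by
        by_cases hsupp : m.support.Nonempty
        · obtain ⟨u, hu⟩ := hsupp
          have hall : ∀ s ∈ m.support, s.1 = u.1 := by
            intro s hs
            by_contra hne
            exact hm ⟨(s, u), hs, hu, hne⟩
          have := embDomain_restr (i := u.1) hall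
          rw [← this]
          exact hf u.1 _
        · have : m = 0 := by
            rw [← Finsupp.support_eq_empty]
            exact Finset.not_nonempty_iff_eq_empty.1 hsupp
          subst this
          obtain ⟨i⟩ := (⟨⟨0, hr⟩⟩ : Nonempty (Fin r))
          have := hf i 0
          rwa [Finsupp.embDomain_zero] at this
      rw [hf0]
      refine (Finset.sum_eq_zero ?_).symm
      intro p hpP
      rw [hXX, MvPowerSeries.coeff_mul_monomial]
      split_ifs with hle
      · rw [coeff_gAux, add_assoc, tsub_add_cancel_of_le hle, hpick]
        simp
      · rfl
  rw [key]
  refine Ideal.sum_mem _ fun p hpP => ?_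
  refine Ideal.mul_mem_left _ _ (Ideal.subset_span ?_)
  exact ⟨p.1.1, p.2.1, p.1.2, p.2.2, (Finset.mem_filter.1 hpP).2, rfl⟩

open Classical in
/-- A lift of a power series in the block-`i` variables to all the variables. -/
noncomputable def liftF (i : Fin r) (g : MvPowerSeries (Fin (n i)) k) :
    MvPowerSeries ((j : Fin r) × Fin (n j)) k :=
  fun m => if ∀ s ∈ m.support, s.1 = i then MvPowerSeries.coeff (restr i m) g else 0

open Classical in
lemma coeff_liftF (i : Fin r) (g : MvPowerSeries (Fin (n i)) k) (m) :
    MvPowerSeries.coeff m (liftF i g) =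
      if ∀ s ∈ m.support, s.1 = i then MvPowerSeries.coeff (restr i m) g else 0 := rfl

lemma restr_zero (i : Fin r) : restr i (0 : ((j : Fin r) × Fin (n j)) →₀ ℕ) = 0 := by
  ext a
  simp [restr]

lemma blockFun_X_mul_X (l i j : Fin r) (a : Fin (n i)) (b : Fin (n j)) (hij : i ≠ j) :
    blockFun l ((MvPowerSeries.X ⟨i, a⟩ * MvPowerSeries.X ⟨j, b⟩ :
      MvPowerSeries ((j : Fin r) × Fin (n j)) k)) = 0 := by
  classical
  ext d
  rw [coeff_blockFun, MvPowerSeries.X, MvPowerSeries.X, MvPowerSeries.monomial_mul_monomial,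
    one_mul, MvPowerSeries.coeff_monomial, map_zero]
  rw [if_neg]
  intro heq
  rcases ne_or_eq i l with hil | rfl
  · have hnotin : (⟨i, a⟩ : (j : Fin r) × Fin (n j)) ∉ Set.range (emb n l) := by
      rintro ⟨x, hx⟩
      exact hil (congrArg Sigma.fst hx).symm
    have h1 := DFunLike.congr_fun heq ⟨i, a⟩
    rw [Finsupp.embDomain_notin_range _ _ _ hnotin] at h1
    simp [Finsupp.single_apply, hij.symm] at h1
  · have hjl : j ≠ i := hij.symm
    have hnotin : (⟨j, b⟩ : (j : Fin r) × Fin (n j)) ∉ Set.range (emb n i) := by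
      rintro ⟨x, hx⟩
      exact hjl (congrArg Sigma.fst hx).symm
    have h1 := DFunLike.congr_fun heq ⟨j, b⟩
    rw [Finsupp.embDomain_notin_range _ _ _ hnotin] at h1
    simp [Finsupp.single_apply, hij] at h1

end Stmt14Aux

/-- The constant coefficient map of a multivariate power series ring as a `k`-algebra
homomorphism. -/
noncomputable def mvConstantCoeffAlgHom (σ k : Type*) [CommRing k] :
    MvPowerSeries σ k →ₐ[k] k :=
  { (MvPowerSeries.constantCoeff : MvPowerSeries σ k →+* k) with
    commutes' := fun r => by
      simp [MvPowerSeries.algebraMap_apply, MvPowerSeries.constantCoeff_C] }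

/-- For a field `k`, `r ≥ 2`, and power series rings `T i = k[[X₁⁽ⁱ⁾, ..., X_{nᵢ}⁽ⁱ⁾]]`,
the iterated fiber product `T₁ ×_k ⋯ ×_k T_r` (the subalgebra of `Π i, T i` of tuples
whose constant terms all agree) is isomorphic as a `k`-algebra to the power series ring
on all the variables modulo the ideal generated by all products of two variables from
different blocks. -/
theorem stmt14 (k : Type*) [Field k] (r : ℕ) (hr : 2 ≤ r) (n : Fin r → ℕ)
    (hn : ∀ i, 1 ≤ n i) :
    Nonempty ((((⨅ (i : Fin r) (j : Fin r),
        AlgHom.equalizer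
          ((mvConstantCoeffAlgHom (Fin (n i)) k).comp
            (Pi.evalAlgHom k (fun l => MvPowerSeries (Fin (n l)) k) i))
          ((mvConstantCoeffAlgHom (Fin (n j)) k).comp
            (Pi.evalAlgHom k (fun l => MvPowerSeries (Fin (n l)) k) j))) :
        Subalgebra k (Π l, MvPowerSeries (Fin (n l)) k)))
      ≃ₐ[k]
      (MvPowerSeries ((i : Fin r) × Fin (n i)) k ⧸
        Ideal.span {p : MvPowerSeries ((i : Fin r) × Fin (n i)) k |
          ∃ (i j : Fin r) (a : Fin (n i)) (b : Fin (n j)), i ≠ j ∧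
            p = MvPowerSeries.X ⟨i, a⟩ * MvPowerSeries.X ⟨j, b⟩})) := by
  classical
  have hr0 : 0 < r := lt_of_lt_of_le two_pos hr
  set S : Subalgebra k (Π l, MvPowerSeries (Fin (n l)) k) :=
    ⨅ (i : Fin r) (j : Fin r),
        AlgHom.equalizer
          ((mvConstantCoeffAlgHom (Fin (n i)) k).comp
            (Pi.evalAlgHom k (fun l => MvPowerSeries (Fin (n l)) k) i))
          ((mvConstantCoeffAlgHom (Fin (n j)) k).comp
            (Pi.evalAlgHom k (fun l => MvPowerSeries (Fin (n l)) k) j)) with hS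
  let Φ : MvPowerSeries ((i : Fin r) × Fin (n i)) k →ₐ[k] Π l, MvPowerSeries (Fin (n l)) k :=
    Pi.algHom k (fun l => MvPowerSeries (Fin (n l)) k) (fun l => Stmt14Aux.blockHom l)
  have hΦapp : ∀ f l, Φ f l = Stmt14Aux.blockFun l f := fun f l => rfl
  have hconst : ∀ (f) (l : Fin r),
      MvPowerSeries.constantCoeff (σ := Fin (n l)) (R := k) (Stmt14Aux.blockFun l f) =
        MvPowerSeries.coeff 0 f := by
    intro f l
    rw [← MvPowerSeries.coeff_zero_eq_constantCoeff_apply, Stmt14Aux.coeff_blockFun,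
      Finsupp.embDomain_zero]
  have hmem : ∀ f, Φ f ∈ S := by
    intro f
    rw [hS]
    simp only [Algebra.mem_iInf]
    intro i j
    rw [AlgHom.mem_equalizer]
    show MvPowerSeries.constantCoeff (Φ f i) =
      MvPowerSeries.constantCoeff (Φ f j)
    rw [hΦapp, hΦapp, hconst, hconst]
  have hsurj : Function.Surjective (Φ.codRestrict S hmem) := by
    rintro ⟨x, hx⟩
    rw [hS] at hx
    simp only [Algebra.mem_iInf, AlgHom.mem_equalizer] at hx
    have hc : ∀ l, MvPowerSeries.constantCoeff (x l) =
        MvPowerSeries.constantCoeff (x ⟨0, hr0⟩) := fun l =>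
      hx l ⟨0, hr0⟩
    set c := MvPowerSeries.constantCoeff (x ⟨0, hr0⟩) with hcdef
    refine ⟨MvPowerSeries.C c +
      ∑ i : Fin r, Stmt14Aux.liftF i (x i - MvPowerSeries.C c), ?_⟩
    apply Subtype.ext
    show Φ _ = x
    funext l
    rw [hΦapp]
    ext d
    rw [Stmt14Aux.coeff_blockFun, map_add, map_sum]
    rcases eq_or_ne d 0 with rfl | hd
    · rw [Finsupp.embDomain_zero]
      have hCc : MvPowerSeries.coeff (0 : ((i : Fin r) × Fin (n i)) →₀ ℕ)
          (MvPowerSeries.C c) = c := by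
        rw [MvPowerSeries.coeff_zero_eq_constantCoeff_apply, MvPowerSeries.constantCoeff_C]
      rw [hCc]
      have hterm : ∀ i ∈ Finset.univ, MvPowerSeries.coeff
          (0 : ((i : Fin r) × Fin (n i)) →₀ ℕ)
          (Stmt14Aux.liftF i (x i - MvPowerSeries.C c)) = 0 := by
        intro i _
        rw [Stmt14Aux.coeff_liftF, if_pos (by simp), Stmt14Aux.restr_zero, map_sub,
          MvPowerSeries.coeff_zero_eq_constantCoeff_apply,
          MvPowerSeries.coeff_zero_eq_constantCoeff_apply, MvPowerSeries.constantCoeff_C,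
          hc i, sub_self]
      rw [Finset.sum_eq_zero hterm, add_zero, MvPowerSeries.coeff_zero_eq_constantCoeff_apply,
        hc l]
    · have hed : Finsupp.embDomain (Stmt14Aux.emb n l) d ≠ 0 := by
        rw [Ne, Finsupp.embDomain_eq_zero]
        exact hd
      have hCc : MvPowerSeries.coeff (Finsupp.embDomain (Stmt14Aux.emb n l) d)
          (MvPowerSeries.C c) = 0 := by
        rw [MvPowerSeries.coeff_C, if_neg hed]
      rw [hCc, zero_add]
      rw [Finset.sum_eq_single l]
      · have hall : ∀ s ∈ (Finsupp.embDomain (Stmt14Aux.emb n l) d).support, s.1 = l :=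
          Stmt14Aux.support_subset_range (fun s => le_rfl)
        rw [Stmt14Aux.coeff_liftF, if_pos hall, Stmt14Aux.restr_embDomain, map_sub,
          MvPowerSeries.coeff_C, if_neg hd, sub_zero]
      · intro i _ hil
        obtain ⟨a, ha⟩ := Finsupp.support_nonempty_iff.2 hd
        have hmemsupp : (Stmt14Aux.emb n l) a ∈
            (Finsupp.embDomain (Stmt14Aux.emb n l) d).support := by
          rw [Finsupp.support_embDomain]
          exact Finset.mem_map_of_mem _ ha
        rw [Stmt14Aux.coeff_liftF, if_neg]
        intro hcond
        exact hil (hcond _ hmemsupp).symm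
      · intro h
        exact absurd (Finset.mem_univ l) h
  have hker : RingHom.ker (Φ.codRestrict S hmem) =
      Ideal.span {p : MvPowerSeries ((i : Fin r) × Fin (n i)) k |
        ∃ (i j : Fin r) (a : Fin (n i)) (b : Fin (n j)), i ≠ j ∧
          p = MvPowerSeries.X ⟨i, a⟩ * MvPowerSeries.X ⟨j, b⟩} := by
    apply le_antisymm
    · intro f h0
      rw [RingHom.mem_ker] at h0
      have hΦ0 : Φ f = 0 := by
        have := congrArg Subtype.val h0
        simpa using this
      apply Stmt14Aux.ker_subset_span hr0
      intro i d
      have hi : Stmt14Aux.blockFun i f = 0 := by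
        rw [← hΦapp f i, hΦ0]
        rfl
      have := congrArg (fun g => MvPowerSeries.coeff d g) hi
      simpa [Stmt14Aux.coeff_blockFun] using this
    · rw [Ideal.span_le]
      rintro p ⟨i, j, a, b, hij, rfl⟩
      rw [SetLike.mem_coe, RingHom.mem_ker]
      apply Subtype.ext
      show Φ _ = 0
      funext l
      rw [hΦapp]
      exact (Stmt14Aux.blockFun_X_mul_X l i j a b hij).trans rfl
  exact ⟨(Ideal.quotientKerAlgEquivOfSurjective hsurj).symm.trans
    (Ideal.quotientEquivAlgOfEq k hker)⟩
end
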